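/- arXiv:1912.12280 — 6 statements merged into one kernel-verified Lean document; each statement's English description precedes it below -/
import Mathlib

section
/- The simultaneous-conjugation action of A₅ on the set P = {(g₁,g₂) ∈ A₅ × A₅ : orderOf g₁ = 3 and orderOf g₂ = 2} is free: if a ∈ A₅ satisfies a g₁ a⁻¹ = g₁ and a g₂ a⁻¹ = g₂ for some (g₁,g₂) ∈ P, then a = 1. -/
set_option maxRecDepth 10000 in
set_option maxHeartbeats 2000000 in
theorem auxA_a5 : ∀ (g a : alternatingGroup (Fin 5)),
    g^3 = 1 → g ≠ 1 → a*g = g*a → a = 1 ∨ a = g ∨ a = g⁻¹ := by decide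

set_option maxRecDepth 10000 in
set_option maxHeartbeats 2000000 in
theorem auxB_a5 : ∀ (a g : alternatingGroup (Fin 5)),
    a^3 = 1 → a ≠ 1 → g^2 = 1 → g ≠ 1 → a*g = g*a → False := by decide

/-- The simultaneous-conjugation action of `A₅` on the set
`P = {(g₁, g₂) ∈ A₅ × A₅ : orderOf g₁ = 3, orderOf g₂ = 2}` is free: if `a ∈ A₅`
fixes some such pair by conjugation, then `a = 1`. -/
theorem a5_conj_action_on_order3_order2_pairs_free
    (a g₁ g₂ : alternatingGroup (Fin 5))
    (h₁ : orderOf g₁ = 3) (h₂ : orderOf g₂ = 2)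
    (ha₁ : a * g₁ * a⁻¹ = g₁) (ha₂ : a * g₂ * a⁻¹ = g₂) : a = 1 := by
  have hg₁3 : g₁ ^ 3 = 1 := by rw [← h₁]; exact pow_orderOf_eq_one g₁
  have hg₁ne : g₁ ≠ 1 := by intro h; rw [h, orderOf_one] at h₁; omega
  have hg₂2 : g₂ ^ 2 = 1 := by rw [← h₂]; exact pow_orderOf_eq_one g₂
  have hg₂ne : g₂ ≠ 1 := by intro h; rw [h, orderOf_one] at h₂; omega
  have hc₁ : a * g₁ = g₁ * a := by
    have := ha₁; rw [mul_inv_eq_iff_eq_mul] at this; exact this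
  have hc₂ : a * g₂ = g₂ * a := by
    have := ha₂; rw [mul_inv_eq_iff_eq_mul] at this; exact this
  rcases auxA_a5 g₁ a hg₁3 hg₁ne hc₁ with h | h | h
  · exact h
  · exfalso
    exact auxB_a5 a g₂ (by rw [h]; exact hg₁3) (by rw [h]; exact hg₁ne) hg₂2 hg₂ne hc₂
  · exfalso
    refine auxB_a5 a g₂ ?_ ?_ hg₂2 hg₂ne hc₂
    · rw [h, inv_pow, hg₁3, inv_one]
    · rw [h]; simpa using hg₁ne
end

section
/- The simultaneous-conjugation action of A₅ on the set P = {(g₁,g₂) ∈ A₅ × A₅ : orderOf g₁ = 3 and orderOf g₂ = 2} has exactly 5 orbits; equivalently, the quotient of P by this action has cardinality 5 (and P itself has 300 elements). -/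
/-- The set `P = {(g₁, g₂) ∈ A₅ × A₅ : orderOf g₁ = 3, orderOf g₂ = 2}`. -/
def PairsA5 : Set (alternatingGroup (Fin 5) × alternatingGroup (Fin 5)) :=
  {p | orderOf p.1 = 3 ∧ orderOf p.2 = 2}

/-- The orbit relation on `PairsA5` for the simultaneous-conjugation action of `A₅`. -/
def PairsA5.conjRel (p q : PairsA5) : Prop :=
  ∃ a : alternatingGroup (Fin 5), (a * p.1.1 * a⁻¹, a * p.1.2 * a⁻¹) = q.1

namespace A5Aux

open Equiv

set_option maxRecDepth 100000

abbrev A5 := alternatingGroup (Fin 5)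

def Rep : Fin 5 → A5 × A5 :=
  ![(⟨c[2,3,4], by rw [Equiv.Perm.mem_alternatingGroup]; decide⟩, ⟨c[1,2]*c[3,4], by rw [Equiv.Perm.mem_alternatingGroup]; decide⟩),
    (⟨c[2,3,4], by rw [Equiv.Perm.mem_alternatingGroup]; decide⟩, ⟨c[0,1]*c[3,4], by rw [Equiv.Perm.mem_alternatingGroup]; decide⟩),
    (⟨c[2,3,4], by rw [Equiv.Perm.mem_alternatingGroup]; decide⟩, ⟨c[0,2]*c[3,4], by rw [Equiv.Perm.mem_alternatingGroup]; decide⟩),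
    (⟨c[2,3,4], by rw [Equiv.Perm.mem_alternatingGroup]; decide⟩, ⟨c[0,2]*c[1,3], by rw [Equiv.Perm.mem_alternatingGroup]; decide⟩),
    (⟨c[2,3,4], by rw [Equiv.Perm.mem_alternatingGroup]; decide⟩, ⟨c[0,2]*c[1,4], by rw [Equiv.Perm.mem_alternatingGroup]; decide⟩)]

/-- simultaneous conjugation -/
def conj (a : A5) (p : A5 × A5) : A5 × A5 := (a * p.1 * a⁻¹, a * p.2 * a⁻¹)

lemma conj_one (p : A5 × A5) : conj 1 p = p := by
  simp [conj]

lemma conj_mul (a b : A5) (p : A5 × A5) : conj (a * b) p = conj a (conj b p) := by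
  simp [conj, mul_assoc]

lemma conj_cancel (a : A5) (p : A5 × A5) : conj a⁻¹ (conj a p) = p := by
  rw [← conj_mul, inv_mul_cancel, conj_one]

def PF : Finset (A5 × A5) :=
  (Finset.univ.filter fun g : A5 => g ^ 3 = 1 ∧ g ≠ 1) ×ˢ
    (Finset.univ.filter fun h : A5 => h ^ 2 = 1 ∧ h ≠ 1)

lemma mem_PF {p : A5 × A5} :
    p ∈ PF ↔ (p.1 ^ 3 = 1 ∧ p.1 ≠ 1) ∧ (p.2 ^ 2 = 1 ∧ p.2 ≠ 1) := by
  simp [PF, Finset.mem_product, Finset.mem_filter]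

lemma card3 : (Finset.univ.filter fun g : A5 => g ^ 3 = 1 ∧ g ≠ 1).card = 20 := by decide
lemma card2 : (Finset.univ.filter fun h : A5 => h ^ 2 = 1 ∧ h ≠ 1).card = 15 := by decide

lemma card_PF : PF.card = 300 := by
  rw [PF, Finset.card_product, card3, card2]

lemma orderIff {p : ℕ} (hp : p.Prime) (x : A5) : orderOf x = p ↔ x ^ p = 1 ∧ x ≠ 1 := by
  constructor
  · intro h
    refine ⟨h ▸ pow_orderOf_eq_one x, ?_⟩
    rintro rfl
    rw [orderOf_one] at h
    exact hp.ne_one h.symm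
  · rintro ⟨h1, h2⟩
    haveI := Fact.mk hp
    exact orderOf_eq_prime h1 h2

lemma mem_pairs_iff {p : A5 × A5} : p ∈ PairsA5 ↔ p ∈ PF := by
  rw [mem_PF]
  constructor
  · rintro ⟨h1, h2⟩
    exact ⟨(orderIff (by norm_num) _).mp h1, (orderIff (by norm_num) _).mp h2⟩
  · rintro ⟨h1, h2⟩
    exact ⟨(orderIff (by norm_num) _).mpr h1, (orderIff (by norm_num) _).mpr h2⟩

lemma conj_mem_PF {p : A5 × A5} (hp : p ∈ PF) (a : A5) : conj a p ∈ PF := by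
  rw [mem_PF] at hp ⊢
  obtain ⟨⟨h1, h2⟩, h3, h4⟩ := hp
  refine ⟨⟨?_, ?_⟩, ?_, ?_⟩
  · simp [conj, conj_pow, h1]
  · simp only [conj, ne_eq, conj_eq_one_iff]
    exact h2
  · simp [conj, conj_pow, h3]
  · simp only [conj, ne_eq, conj_eq_one_iff]
    exact h4

lemma rep_mem_PF (i : Fin 5) : Rep i ∈ PF := by
  fin_cases i <;> decide

lemma stab_trivial : ∀ (i : Fin 5) (a : A5), conj a (Rep i) = Rep i → a = 1 := by decide

lemma nonrel : ∀ (i j : Fin 5) (a : A5), conj a (Rep i) = Rep j → i = j := by decide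

def O (i : Fin 5) : Finset (A5 × A5) := Finset.univ.image (fun a => conj a (Rep i))

lemma conj_inj (i : Fin 5) : Function.Injective (fun a => conj a (Rep i)) := by
  intro a b h
  have h' : conj a (Rep i) = conj b (Rep i) := h
  have : conj (b⁻¹ * a) (Rep i) = Rep i := by
    rw [conj_mul, h']
    exact conj_cancel b (Rep i)
  have := stab_trivial i _ this
  rwa [inv_mul_eq_one, eq_comm] at this

lemma card_A5 : Fintype.card A5 = 60 := by decide

lemma card_O (i : Fin 5) : (O i).card = 60 := by
  rw [O, Finset.card_image_of_injective _ (conj_inj i), Finset.card_univ, card_A5]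

lemma O_subset (i : Fin 5) : O i ⊆ PF := by
  intro p hp
  rw [O, Finset.mem_image] at hp
  obtain ⟨a, _, rfl⟩ := hp
  exact conj_mem_PF (rep_mem_PF i) a

lemma O_disjoint : ∀ i j : Fin 5, i ≠ j → Disjoint (O i) (O j) := by
  intro i j hij
  rw [Finset.disjoint_left]
  intro p hpi hpj
  rw [O, Finset.mem_image] at hpi hpj
  obtain ⟨a, _, ha⟩ := hpi
  obtain ⟨b, _, hb⟩ := hpj
  apply hij
  apply nonrel i j (b⁻¹ * a)
  rw [conj_mul, ha, ← hb]
  exact conj_cancel b (Rep j)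

lemma union_eq : Finset.univ.biUnion O = PF := by
  apply Finset.eq_of_subset_of_card_le
  · intro p hp
    rw [Finset.mem_biUnion] at hp
    obtain ⟨i, _, hpi⟩ := hp
    exact O_subset i hpi
  · rw [card_PF, Finset.card_biUnion (fun i _ j _ hij => O_disjoint i j hij)]
    simp [card_O]

lemma cover {p : A5 × A5} (hp : p ∈ PF) : ∃ (i : Fin 5) (a : A5), conj a (Rep i) = p := by
  rw [← union_eq, Finset.mem_biUnion] at hp
  obtain ⟨i, _, hpi⟩ := hp
  rw [O, Finset.mem_image] at hpi
  obtain ⟨a, _, ha⟩ := hpi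
  exact ⟨i, a, ha⟩

lemma rel_equivalence : Equivalence PairsA5.conjRel := by
  constructor
  · intro p
    exact ⟨1, by simp⟩
  · rintro p q ⟨a, ha⟩
    refine ⟨a⁻¹, ?_⟩
    have h1 : a * p.1.1 * a⁻¹ = q.1.1 := congrArg Prod.fst ha
    have h2 : a * p.1.2 * a⁻¹ = q.1.2 := congrArg Prod.snd ha
    rw [Prod.ext_iff]
    constructor
    · show a⁻¹ * q.1.1 * a⁻¹⁻¹ = p.1.1
      rw [← h1]; group
    · show a⁻¹ * q.1.2 * a⁻¹⁻¹ = p.1.2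
      rw [← h2]; group
  · rintro p q s ⟨a, ha⟩ ⟨b, hb⟩
    refine ⟨b * a, ?_⟩
    have h1 : a * p.1.1 * a⁻¹ = q.1.1 := congrArg Prod.fst ha
    have h2 : a * p.1.2 * a⁻¹ = q.1.2 := congrArg Prod.snd ha
    have h3 : b * q.1.1 * b⁻¹ = s.1.1 := congrArg Prod.fst hb
    have h4 : b * q.1.2 * b⁻¹ = s.1.2 := congrArg Prod.snd hb
    rw [Prod.ext_iff]
    constructor
    · show b * a * p.1.1 * (b * a)⁻¹ = s.1.1
      rw [← h3, ← h1]; group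
    · show b * a * p.1.2 * (b * a)⁻¹ = s.1.2
      rw [← h4, ← h2]; group

def repPair (i : Fin 5) : PairsA5 := ⟨Rep i, mem_pairs_iff.mpr (rep_mem_PF i)⟩

def e (i : Fin 5) : Quot PairsA5.conjRel := Quot.mk _ (repPair i)

lemma e_bijective : Function.Bijective e := by
  constructor
  · intro i j hij
    have h := Quot.eqvGen_exact hij
    rw [rel_equivalence.eqvGen_iff] at h
    obtain ⟨a, ha⟩ := h
    exact nonrel i j a ha
  · intro q
    induction q using Quot.ind with
    | mk p =>
      obtain ⟨i, a, ha⟩ := cover (mem_pairs_iff.mp p.2)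
      refine ⟨i, Quot.sound ⟨a, ?_⟩⟩
      exact ha

end A5Aux

/-- The simultaneous-conjugation action of `A₅` on `P` has exactly `5` orbits,
and `P` itself has `300` elements. -/
theorem a5_conj_action_on_order3_order2_pairs_five_orbits :
    Nat.card (Quot PairsA5.conjRel) = 5 ∧ Nat.card PairsA5 = 300 := by
  constructor
  · rw [← Nat.card_eq_of_bijective A5Aux.e A5Aux.e_bijective]
    simp
  · have h : PairsA5 = ↑A5Aux.PF := by
      ext p
      rw [Finset.mem_coe]
      exact A5Aux.mem_pairs_iff
    rw [h, Nat.card_coe_set_eq, Set.ncard_coe_finset, A5Aux.card_PF]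
end

section
/- For every pair (g₁,g₂) in P = {(g₁,g₂) ∈ A₅ × A₅ : orderOf g₁ = 3 and orderOf g₂ = 2}, the order of the product g₁g₂ lies in {2,3,5}. Moreover the simultaneous-conjugation action of S₅ on P has exactly 3 orbits, and two pairs (g₁,g₂), (g₁′,g₂′) ∈ P lie in the same S₅-orbit if and only if orderOf (g₁g₂) = orderOf (g₁′g₂′). -/
/-- The orbit relation on `PairsA5` for the simultaneous-conjugation action of the full
symmetric group `S₅` (conjugation of elements of `A₅` by a permutation again lands
in `A₅`; we express the relation via the coercions to `S₅`). -/
def PairsA5.s5ConjRel (p q : PairsA5) : Prop :=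
  ∃ s : Equiv.Perm (Fin 5),
    s * (p.1.1 : Equiv.Perm (Fin 5)) * s⁻¹ = (q.1.1 : Equiv.Perm (Fin 5)) ∧
    s * (p.1.2 : Equiv.Perm (Fin 5)) * s⁻¹ = (q.1.2 : Equiv.Perm (Fin 5))

namespace S5Aux

open Equiv

set_option maxRecDepth 1000000

def r1 : Perm (Fin 5) := c[0, 1, 2]
def w2 : Perm (Fin 5) := c[1, 2] * c[3, 4]
def w3 : Perm (Fin 5) := c[0, 1] * c[2, 3]
def w5 : Perm (Fin 5) := c[1, 3] * c[2, 4]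

def w (k : ℕ) : Perm (Fin 5) := if k = 2 then w2 else if k = 3 then w3 else w5

instance : Fact (Nat.Prime 5) := ⟨by norm_num⟩

set_option maxHeartbeats 8000000 in
theorem L1 : ∀ g₁ g₂ : Perm (Fin 5), g₁ ^ 3 = 1 → g₁ ≠ 1 → g₂ ^ 2 = 1 →
    Perm.sign g₂ = 1 → g₂ ≠ 1 →
    (g₁ * g₂ ≠ 1 ∧ ((g₁ * g₂) ^ 2 = 1 ∨ (g₁ * g₂) ^ 3 = 1 ∨ (g₁ * g₂) ^ 5 = 1)) := by
  decide

set_option maxHeartbeats 8000000 in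
theorem L2a : ∀ g : Perm (Fin 5), g ^ 3 = 1 → g ≠ 1 →
    ∃ s : Perm (Fin 5), s * r1 * s⁻¹ = g := by decide

set_option maxHeartbeats 8000000 in
theorem L2b2 : ∀ g : Perm (Fin 5), g ^ 2 = 1 → Perm.sign g = 1 → g ≠ 1 → (r1 * g) ^ 2 = 1 →
    ∃ s : Perm (Fin 5), s * r1 * s⁻¹ = r1 ∧ s * w2 * s⁻¹ = g := by decide

set_option maxHeartbeats 8000000 in
theorem L2b3 : ∀ g : Perm (Fin 5), g ^ 2 = 1 → Perm.sign g = 1 → g ≠ 1 → (r1 * g) ^ 3 = 1 →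
    ∃ s : Perm (Fin 5), s * r1 * s⁻¹ = r1 ∧ s * w3 * s⁻¹ = g := by decide

set_option maxHeartbeats 8000000 in
theorem L2b5 : ∀ g : Perm (Fin 5), g ^ 2 = 1 → Perm.sign g = 1 → g ≠ 1 → (r1 * g) ^ 5 = 1 →
    ∃ s : Perm (Fin 5), s * r1 * s⁻¹ = r1 ∧ s * w5 * s⁻¹ = g := by decide

theorem L2b (k : ℕ) (hk : k = 2 ∨ k = 3 ∨ k = 5) :
    ∀ g : Perm (Fin 5), g ^ 2 = 1 → Perm.sign g = 1 → g ≠ 1 → (r1 * g) ^ k = 1 →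
    ∃ s : Perm (Fin 5), s * r1 * s⁻¹ = r1 ∧ s * (w k) * s⁻¹ = g := by
  rcases hk with rfl | rfl | rfl
  · simpa [w] using L2b2
  · simpa [w] using L2b3
  · simpa [w] using L2b5

/-- Basic facts about a member of `PairsA5`, at the level of `Perm (Fin 5)`. -/
theorem unpack (p : PairsA5) :
    (p.1.1 : Perm (Fin 5)) ^ 3 = 1 ∧ (p.1.1 : Perm (Fin 5)) ≠ 1 ∧
    (p.1.2 : Perm (Fin 5)) ^ 2 = 1 ∧ Perm.sign (p.1.2 : Perm (Fin 5)) = 1 ∧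
    (p.1.2 : Perm (Fin 5)) ≠ 1 := by
  obtain ⟨h1, h2⟩ := p.2
  rw [← Subgroup.orderOf_coe] at h1 h2
  refine ⟨by rw [← h1]; exact pow_orderOf_eq_one _, ?_, by rw [← h2]; exact pow_orderOf_eq_one _,
    ?_, ?_⟩
  · intro h; rw [h, orderOf_one] at h1; omega
  · exact Equiv.Perm.mem_alternatingGroup.mp p.1.2.2
  · intro h; rw [h, orderOf_one] at h2; omega

/-- The order of the product, at the `Perm` level. -/
theorem prodOrder (p : PairsA5) :
    orderOf ((p.1.1 : Perm (Fin 5)) * p.1.2) = 2 ∨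
    orderOf ((p.1.1 : Perm (Fin 5)) * p.1.2) = 3 ∨
    orderOf ((p.1.1 : Perm (Fin 5)) * p.1.2) = 5 := by
  obtain ⟨h3, hn1, h2, hs, hn2⟩ := unpack p
  obtain ⟨hne, hpow⟩ := L1 _ _ h3 hn1 h2 hs hn2
  rcases hpow with h | h | h
  · exact Or.inl (orderOf_eq_prime h hne)
  · exact Or.inr (Or.inl (orderOf_eq_prime h hne))
  · exact Or.inr (Or.inr (orderOf_eq_prime h hne))

theorem coe_prodOrder (p : PairsA5) :
    orderOf (p.1.1 * p.1.2) = orderOf ((p.1.1 : Perm (Fin 5)) * p.1.2) := by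
  rw [← Subgroup.orderOf_coe (p.1.1 * p.1.2)]; norm_cast

/-- Every pair is reachable from the standard representative of its product-order class. -/
theorem reach (p : PairsA5) :
    ∃ s : Perm (Fin 5), s * r1 * s⁻¹ = (p.1.1 : Perm (Fin 5)) ∧
      s * (w (orderOf ((p.1.1 : Perm (Fin 5)) * p.1.2))) * s⁻¹ = (p.1.2 : Perm (Fin 5)) := by
  obtain ⟨h3, hn1, h2, hsgn, hn2⟩ := unpack p
  set k := orderOf ((p.1.1 : Perm (Fin 5)) * p.1.2) with hk
  have hkcases : k = 2 ∨ k = 3 ∨ k = 5 := prodOrder p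
  have hpk : ((p.1.1 : Perm (Fin 5)) * p.1.2) ^ k = 1 := pow_orderOf_eq_one _
  obtain ⟨s, hs⟩ := L2a _ h3 hn1
  set g₂' : Perm (Fin 5) := s⁻¹ * p.1.2 * s with hg₂'
  have cpow : ∀ (x : Equiv.Perm (Fin 5)) (n : ℕ), (s⁻¹ * x * s) ^ n = s⁻¹ * x ^ n * s := by
    intro x n; have h := @conj_pow (Equiv.Perm (Fin 5)) _ n s⁻¹ x; simpa using h
  have e2 : g₂' ^ 2 = 1 := by
    rw [hg₂', cpow, h2]; group
  have esgn : Perm.sign g₂' = 1 := by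
    rw [hg₂']; simp [hsgn]
  have en1 : g₂' ≠ 1 := by
    rw [hg₂']; intro h
    apply hn2
    have := congrArg (fun x => s * x * s⁻¹) h
    simpa [mul_assoc] using this
  have epk : (r1 * g₂') ^ k = 1 := by
    have : r1 * g₂' = s⁻¹ * ((p.1.1 : Perm (Fin 5)) * p.1.2) * s := by
      rw [hg₂', ← hs]; group
    rw [this, cpow, hpk]; group
  obtain ⟨t, ht1, ht2⟩ := L2b k hkcases g₂' e2 esgn en1 epk
  refine ⟨s * t, ?_, ?_⟩
  · rw [mul_inv_rev, show s * t * r1 * (t⁻¹ * s⁻¹) = s * (t * r1 * t⁻¹) * s⁻¹ by group, ht1, hs]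
  · rw [mul_inv_rev, show s * t * w k * (t⁻¹ * s⁻¹) = s * (t * w k * t⁻¹) * s⁻¹ by group, ht2,
      hg₂']
    group

theorem rel_of_eq_order (p q : PairsA5)
    (h : orderOf (p.1.1 * p.1.2) = orderOf (q.1.1 * q.1.2)) : PairsA5.s5ConjRel p q := by
  obtain ⟨s, hs1, hs2⟩ := reach p
  obtain ⟨t, ht1, ht2⟩ := reach q
  rw [coe_prodOrder p, coe_prodOrder q] at h
  rw [← h] at ht2
  refine ⟨t * s⁻¹, ?_, ?_⟩
  · rw [← hs1, ← ht1]; group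
  · rw [← hs2, ← ht2]; group

theorem eq_order_of_rel (p q : PairsA5) (h : PairsA5.s5ConjRel p q) :
    orderOf (p.1.1 * p.1.2) = orderOf (q.1.1 * q.1.2) := by
  obtain ⟨s, hs1, hs2⟩ := h
  rw [coe_prodOrder p, coe_prodOrder q]
  have hsc : SemiconjBy s ((p.1.1 : Perm (Fin 5)) * p.1.2)
      ((q.1.1 : Perm (Fin 5)) * q.1.2) := by
    unfold SemiconjBy
    rw [← hs1, ← hs2]; group
  exact hsc.orderOf_eq s

/-- The three standard representatives, as elements of `PairsA5`. -/
def rep (k : ℕ) (hk : k = 2 ∨ k = 3 ∨ k = 5) : PairsA5 := by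
  refine ⟨(⟨r1, ?_⟩, ⟨w k, ?_⟩), ?_, ?_⟩
  · rw [Equiv.Perm.mem_alternatingGroup]; decide
  · rw [Equiv.Perm.mem_alternatingGroup]
    rcases hk with rfl | rfl | rfl <;> decide
  · rw [Subgroup.orderOf_mk]
    exact orderOf_eq_prime (by decide) (by decide)
  · rw [Subgroup.orderOf_mk]
    refine orderOf_eq_prime ?_ ?_ <;> rcases hk with rfl | rfl | rfl <;> decide

theorem rep_prodOrder (k : ℕ) (hk : k = 2 ∨ k = 3 ∨ k = 5) :
    orderOf ((rep k hk).1.1 * (rep k hk).1.2) = k := by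
  rw [coe_prodOrder]
  haveI : Fact (Nat.Prime k) := ⟨by rcases hk with rfl | rfl | rfl <;> norm_num⟩
  refine orderOf_eq_prime ?_ ?_ <;> rcases hk with rfl | rfl | rfl <;>
    simp only [rep, w] <;> decide

end S5Aux

open S5Aux in
/-- For every pair `(g₁, g₂) ∈ P` the order of `g₁g₂` lies in `{2, 3, 5}`, the
simultaneous-conjugation action of `S₅` on `P` has exactly `3` orbits, and two pairs
lie in the same `S₅`-orbit iff the products have equal order. -/
theorem s5_orbits_on_order3_order2_pairs :
    (∀ p : PairsA5, orderOf (p.1.1 * p.1.2) ∈ ({2, 3, 5} : Set ℕ)) ∧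
    Nat.card (Quot PairsA5.s5ConjRel) = 3 ∧
    (∀ p q : PairsA5,
      PairsA5.s5ConjRel p q ↔ orderOf (p.1.1 * p.1.2) = orderOf (q.1.1 * q.1.2)) := by
  have hord : ∀ p : PairsA5, orderOf (p.1.1 * p.1.2) = 2 ∨ orderOf (p.1.1 * p.1.2) = 3 ∨
      orderOf (p.1.1 * p.1.2) = 5 := by
    intro p; rw [coe_prodOrder p]; exact prodOrder p
  have hiff : ∀ p q : PairsA5,
      PairsA5.s5ConjRel p q ↔ orderOf (p.1.1 * p.1.2) = orderOf (q.1.1 * q.1.2) :=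
    fun p q => ⟨eq_order_of_rel p q, rel_of_eq_order p q⟩
  refine ⟨fun p => by rcases hord p with h | h | h <;> simp [h], ?_, hiff⟩
  -- count orbits
  let f : PairsA5 → Fin 3 := fun p =>
    if orderOf (p.1.1 * p.1.2) = 2 then 0 else if orderOf (p.1.1 * p.1.2) = 3 then 1 else 2
  have hf : ∀ p q : PairsA5, PairsA5.s5ConjRel p q → f p = f q := by
    intro p q h
    simp only [f, eq_order_of_rel p q h]
  have hford : ∀ p q : PairsA5, f p = f q →
      orderOf (p.1.1 * p.1.2) = orderOf (q.1.1 * q.1.2) := by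
    intro p q h
    rcases hord p with hp | hp | hp <;> rcases hord q with hq | hq | hq <;>
      simp [f, hp, hq] at h ⊢
  let F : Quot PairsA5.s5ConjRel → Fin 3 := Quot.lift f hf
  have hbij : Function.Bijective F := by
    constructor
    · intro x y
      induction x using Quot.ind with | _ p =>
      induction y using Quot.ind with | _ q =>
      intro h
      exact Quot.sound (rel_of_eq_order p q (hford p q h))
    · intro i
      fin_cases i
      · exact ⟨Quot.mk _ (rep 2 (by norm_num)), by simp [F, f, rep_prodOrder]⟩
      · exact ⟨Quot.mk _ (rep 3 (by norm_num)), by simp [F, f, rep_prodOrder]⟩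
      · exact ⟨Quot.mk _ (rep 5 (by norm_num)), by simp [F, f, rep_prodOrder]⟩
  rw [Nat.card_congr (Equiv.ofBijective F hbij)]
  simp
end

section
/- The quadratic form Q(x₁,x₂,x₃) = 2x₁² + 3x₂² + x₃² − 2x₁x₃ − 3x₂x₃ is anisotropic over ℚ: for every x ∈ ℚ³, Q(x) = 0 implies x = 0. (Equivalently, the conic in the projective plane defined by Q has no rational point.) -/
/-- Integer anisotropy of `2a² + 3b² - c²` by 3-adic descent. -/
lemma int_aniso : ∀ n : ℕ, ∀ a b c : ℤ, c.natAbs ≤ n → 2*a^2 + 3*b^2 = c^2 →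
    a = 0 ∧ b = 0 ∧ c = 0 := by
  intro n
  induction n with
  | zero =>
    intro a b c hc h
    have hc0 : c = 0 := by omega
    subst hc0
    refine ⟨?_, ?_, rfl⟩
    · nlinarith [sq_nonneg a, sq_nonneg b]
    · nlinarith [sq_nonneg a, sq_nonneg b]
  | succ n ih =>
    intro a b c hc h
    have hmod : ((2*a^2 + 3*b^2 : ℤ) : ZMod 3) = ((c^2 : ℤ) : ZMod 3) := by
      exact_mod_cast congrArg _ h
    push_cast at hmod
    have key : (a : ZMod 3) = 0 ∧ (c : ZMod 3) = 0 := by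
      revert hmod
      generalize (a : ZMod 3) = u
      generalize (b : ZMod 3) = w
      generalize (c : ZMod 3) = v
      revert u w v; decide
    have ha3 : (3:ℤ) ∣ a := by
      have := key.1; rwa [ZMod.intCast_zmod_eq_zero_iff_dvd] at this
    have hc3 : (3:ℤ) ∣ c := by
      have := key.2; rwa [ZMod.intCast_zmod_eq_zero_iff_dvd] at this
    obtain ⟨a', rfl⟩ := ha3
    obtain ⟨c', rfl⟩ := hc3
    have hb3 : (3:ℤ) ∣ b := by
      have h3 : (3:ℤ) ∣ b^2 := ⟨c'^2 - 2*a'^2, by nlinarith [h]⟩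
      exact Int.Prime.dvd_pow' (by norm_num) h3
    obtain ⟨b', rfl⟩ := hb3
    have h'' : 2*a'^2 + 3*b'^2 = c'^2 := by nlinarith [h]
    have hsz : c'.natAbs ≤ n := by
      have : (3*c').natAbs = 3 * c'.natAbs := by simp [Int.natAbs_mul]
      omega
    obtain ⟨ha, hb, hcz⟩ := ih a' b' c' hsz h''
    exact ⟨by rw [ha]; ring, by rw [hb]; ring, by rw [hcz]; ring⟩

/-- Rational anisotropy of `2a² + 3b² - c²`. -/
lemma rat_aniso (a b c : ℚ) (h : 2*a^2 + 3*b^2 = c^2) : a = 0 ∧ b = 0 ∧ c = 0 := by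
  have hda : ((a.den : ℚ)) ≠ 0 := by exact_mod_cast a.den_ne_zero
  have hdb : ((b.den : ℚ)) ≠ 0 := by exact_mod_cast b.den_ne_zero
  have hdc : ((c.den : ℚ)) ≠ 0 := by exact_mod_cast c.den_ne_zero
  have ea : (a.num : ℚ) = a * a.den := by
    exact (div_eq_iff hda).mp (Rat.num_div_den a)
  have eb : (b.num : ℚ) = b * b.den := by
    exact (div_eq_iff hdb).mp (Rat.num_div_den b)
  have ec : (c.num : ℚ) = c * c.den := by
    exact (div_eq_iff hdc).mp (Rat.num_div_den c)
  set A : ℤ := a.num * b.den * c.den with hA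
  set B : ℤ := b.num * a.den * c.den with hB
  set C : ℤ := c.num * a.den * b.den with hC
  have hint : (2*A^2 + 3*B^2 : ℚ) = (C^2 : ℚ) := by
    rw [hA, hB, hC]
    push_cast
    rw [ea, eb, ec]
    ring_nf
    linear_combination ((a.den:ℚ) * b.den * c.den)^2 * h
  have hZ : 2*A^2 + 3*B^2 = C^2 := by exact_mod_cast hint
  obtain ⟨hA0, hB0, hC0⟩ := int_aniso C.natAbs A B C le_rfl hZ
  have hbd : (b.den : ℤ) ≠ 0 := by exact_mod_cast b.den_ne_zero
  have had : (a.den : ℤ) ≠ 0 := by exact_mod_cast a.den_ne_zero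
  have hcd : (c.den : ℤ) ≠ 0 := by exact_mod_cast c.den_ne_zero
  refine ⟨?_, ?_, ?_⟩
  · rw [← Rat.num_eq_zero]
    rcases mul_eq_zero.mp ((mul_eq_zero.mp hA0).resolve_right hcd) with h1 | h2
    · exact h1
    · exact absurd h2 hbd
  · rw [← Rat.num_eq_zero]
    rcases mul_eq_zero.mp ((mul_eq_zero.mp hB0).resolve_right hcd) with h1 | h2
    · exact h1
    · exact absurd h2 had
  · rw [← Rat.num_eq_zero]
    rcases mul_eq_zero.mp ((mul_eq_zero.mp hC0).resolve_right hbd) with h1 | h2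
    · exact h1
    · exact absurd h2 had

/-- The Tits quadratic form of the `(6,4,2)`-triangle group, over `ℚ`. -/
def titsFormQ (x : Fin 3 → ℚ) : ℚ :=
  2 * x 0 ^ 2 + 3 * x 1 ^ 2 + x 2 ^ 2 - 2 * x 0 * x 2 - 3 * x 1 * x 2

/-- The quadratic form `Q(x₁,x₂,x₃) = 2x₁² + 3x₂² + x₃² − 2x₁x₃ − 3x₂x₃` is
anisotropic over `ℚ`: it only represents `0` trivially. -/
theorem titsFormQ_anisotropic (x : Fin 3 → ℚ) (hx : titsFormQ x = 0) : x = 0 := by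
  unfold titsFormQ at hx
  have h : 2*(2*x 0 - x 2)^2 + 3*(2*x 1 - x 2)^2 = (x 2)^2 := by
    linear_combination 4 * hx
  obtain ⟨h1, h2, h3⟩ := rat_aniso _ _ _ h
  funext i
  fin_cases i <;> simp <;> linarith
end

section
/- Let Q be the quadratic form Q(x₁,x₂,x₃) = 2x₁² + 3x₂² + x₃² − 2x₁x₃ − 3x₂x₃ on ℚ³, and let C(Q) be its Clifford algebra over ℚ. For every element a of the even subalgebra of C(Q), the norm a · reverse(a) lies in the image of ℚ under the structure map (it is a scalar), and if a ≠ 0 then a · reverse(a) ≠ 0. -/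
private lemma zmod3_sq : ∀ a b : ZMod 3, a^2 = 2*b^2 → a = 0 ∧ b = 0 := by decide

private lemma int_descent : ∀ n : ℕ, ∀ s u v w : ℤ,
    s.natAbs + u.natAbs + v.natAbs + w.natAbs ≤ n →
    s^2 + 6*u^2 = 3*v^2 + 2*w^2 → s = 0 ∧ u = 0 ∧ v = 0 ∧ w = 0 := by
  intro n
  induction n using Nat.strong_induction_on with
  | _ n ih =>
    intro s u v w hn h
    rcases Nat.eq_zero_or_pos n with hn0 | hnpos
    · subst hn0
      simp only [Nat.le_zero, Nat.add_eq_zero, Int.natAbs_eq_zero] at hn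
      exact ⟨hn.1.1.1, hn.1.1.2, hn.1.2, hn.2⟩
    have h3 : ((s : ZMod 3))^2 = 2 * (w : ZMod 3)^2 := by
      have := congrArg (fun z : ℤ => (z : ZMod 3)) h
      push_cast at this
      have h6 : (6 : ZMod 3) = 0 := by decide
      have h3' : (3 : ZMod 3) = 0 := by decide
      rw [h6, h3'] at this
      simpa using this
    obtain ⟨hs0, hw0⟩ := zmod3_sq _ _ h3
    obtain ⟨s₁, rfl⟩ : (3 : ℤ) ∣ s :=
      (ZMod.intCast_zmod_eq_zero_iff_dvd s 3).mp hs0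
    obtain ⟨w₁, rfl⟩ : (3 : ℤ) ∣ w :=
      (ZMod.intCast_zmod_eq_zero_iff_dvd w 3).mp hw0
    have h' : 9*s₁^2 + 6*u^2 = 3*v^2 + 18*w₁^2 := by linear_combination h
    have h2 : 3*s₁^2 + 2*u^2 = v^2 + 6*w₁^2 := by linarith
    have h3b : ((v : ZMod 3))^2 = 2 * (u : ZMod 3)^2 := by
      have := congrArg (fun z : ℤ => (z : ZMod 3)) h2
      push_cast at this
      have h6 : (6 : ZMod 3) = 0 := by decide
      have h3' : (3 : ZMod 3) = 0 := by decide
      rw [h6, h3'] at this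
      simpa using this.symm
    obtain ⟨hv0, hu0⟩ := zmod3_sq _ _ h3b
    obtain ⟨u₁, rfl⟩ : (3 : ℤ) ∣ u :=
      (ZMod.intCast_zmod_eq_zero_iff_dvd u 3).mp hu0
    obtain ⟨v₁, rfl⟩ : (3 : ℤ) ∣ v :=
      (ZMod.intCast_zmod_eq_zero_iff_dvd v 3).mp hv0
    have h'' : 3*s₁^2 + 18*u₁^2 = 9*v₁^2 + 6*w₁^2 := by linear_combination h2
    have hnew : s₁^2 + 6*u₁^2 = 3*v₁^2 + 2*w₁^2 := by linarith
    have hm : s₁.natAbs + u₁.natAbs + v₁.natAbs + w₁.natAbs < n := by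
      have e1 : (3*s₁).natAbs = 3 * s₁.natAbs := by simp [Int.natAbs_mul]
      have e2 : (3*u₁).natAbs = 3 * u₁.natAbs := by simp [Int.natAbs_mul]
      have e3 : (3*v₁).natAbs = 3 * v₁.natAbs := by simp [Int.natAbs_mul]
      have e4 : (3*w₁).natAbs = 3 * w₁.natAbs := by simp [Int.natAbs_mul]
      omega
    obtain ⟨a, b, c, d⟩ := ih _ hm s₁ u₁ v₁ w₁ le_rfl hnew
    subst a; subst b; subst c; subst d
    norm_num

private lemma rat_aniso_s11 (s u v w : ℚ) (h : s^2 + 6*u^2 = 3*v^2 + 2*w^2) :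
    s = 0 ∧ u = 0 ∧ v = 0 ∧ w = 0 := by
  have key : ∀ q : ℚ, q * (q.den : ℚ) = (q.num : ℚ) := fun q =>
    (eq_div_iff (by exact_mod_cast q.den_nz)).mp (Rat.num_div_den q).symm
  obtain ⟨d, hd, S, U, V, W, hS, hU, hV, hW⟩ :
      ∃ d : ℚ, d ≠ 0 ∧ ∃ S U V W : ℤ, (S:ℚ) = d*s ∧ (U:ℚ) = d*u ∧ (V:ℚ) = d*v ∧ (W:ℚ) = d*w := by
    refine ⟨(s.den : ℚ) * u.den * v.den * w.den, by positivity,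
      s.num * (u.den * v.den * w.den), u.num * (s.den * v.den * w.den),
      v.num * (s.den * u.den * w.den), w.num * (s.den * u.den * v.den), ?_, ?_, ?_, ?_⟩ <;>
      push_cast
    · linear_combination -((u.den : ℚ) * v.den * w.den) * key s
    · linear_combination -((s.den : ℚ) * v.den * w.den) * key u
    · linear_combination -((s.den : ℚ) * u.den * w.den) * key v
    · linear_combination -((s.den : ℚ) * u.den * v.den) * key w
  have hZ : S^2 + 6*U^2 = 3*V^2 + 2*W^2 := by
    have : (S:ℚ)^2 + 6*(U:ℚ)^2 = 3*(V:ℚ)^2 + 2*(W:ℚ)^2 := by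
      rw [hS, hU, hV, hW]; linear_combination d^2 * h
    exact_mod_cast this
  obtain ⟨a, b, c, e⟩ := int_descent _ S U V W le_rfl hZ
  rw [a] at hS; rw [b] at hU; rw [c] at hV; rw [e] at hW
  push_cast at hS hU hV hW
  refine ⟨?_, ?_, ?_, ?_⟩ <;>
    [exact (mul_eq_zero.mp hS.symm).resolve_left hd;
     exact (mul_eq_zero.mp hU.symm).resolve_left hd;
     exact (mul_eq_zero.mp hV.symm).resolve_left hd;
     exact (mul_eq_zero.mp hW.symm).resolve_left hd]
open CliffordAlgebra

/-- For the Tits form `Q(x₁,x₂,x₃) = 2x₁² + 3x₂² + x₃² − 2x₁x₃ − 3x₂x₃` over `ℚ`,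
the norm `a * reverse a` of any element `a` of the even subalgebra of the Clifford
algebra `C(Q)` is a scalar, and it is nonzero whenever `a ≠ 0`. -/
theorem even_clifford_norm_scalar_and_nonzero
    (Q : QuadraticForm ℚ (Fin 3 → ℚ))
    (hQ : ∀ x, Q x = 2 * x 0 ^ 2 + 3 * x 1 ^ 2 + x 2 ^ 2 - 2 * x 0 * x 2 - 3 * x 1 * x 2) :
    ∀ a ∈ CliffordAlgebra.even Q,
      (∃ r : ℚ, a * CliffordAlgebra.reverse a = algebraMap ℚ (CliffordAlgebra Q) r) ∧
      (a ≠ 0 → a * CliffordAlgebra.reverse a ≠ 0) := by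
  intro a ha
  set v0 : Fin 3 → ℚ := ![1, 0, 0] with hv0
  set v1 : Fin 3 → ℚ := ![0, 1, 0] with hv1
  set v2 : Fin 3 → ℚ := ![1/2, 1/2, 1] with hv2
  have simpQ : ∀ a b c : ℚ, Q ![a, b, c] = 2*a^2 + 3*b^2 + c^2 - 2*a*c - 3*b*c := by
    intro a b c; rw [hQ]; norm_num; rfl
  set f0 : CliffordAlgebra Q := ι Q v0 with hf0
  set f1 : CliffordAlgebra Q := ι Q v1 with hf1
  set f2 : CliffordAlgebra Q := ι Q v2 with hf2
  -- squares, as scalar multiples of 1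
  have sq0 : f0 * f0 = (2:ℚ) • (1 : CliffordAlgebra Q) := by
    rw [hf0, ι_sq_scalar, hv0, simpQ, Algebra.algebraMap_eq_smul_one]; norm_num
  have sq1 : f1 * f1 = (3:ℚ) • (1 : CliffordAlgebra Q) := by
    rw [hf1, ι_sq_scalar, hv1, simpQ, Algebra.algebraMap_eq_smul_one]; norm_num
  have sq2 : f2 * f2 = (-1/4 : ℚ) • (1 : CliffordAlgebra Q) := by
    rw [hf2, ι_sq_scalar, hv2, simpQ, Algebra.algebraMap_eq_smul_one]; norm_num
  have polar_eq : ∀ m n : Fin 3 → ℚ, QuadraticMap.polar Q m n = Q (m + n) - Q m - Q n :=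
    fun m n => rfl
  -- anticommutation
  have ac01 : f1 * f0 = -(f0 * f1) := by
    have h := CliffordAlgebra.ι_mul_ι_comm (Q := Q) v1 v0
    rw [polar_eq, hv0, hv1, show ((![0,1,0] : Fin 3 → ℚ) + ![1,0,0]) = ![1,1,0] by
      funext i; fin_cases i <;> norm_num, simpQ, simpQ, simpQ] at h
    rw [hf0, hf1, hv0, hv1, h]; norm_num
  have ac02 : f2 * f0 = -(f0 * f2) := by
    have h := CliffordAlgebra.ι_mul_ι_comm (Q := Q) v2 v0
    rw [polar_eq, hv0, hv2, show ((![1/2,1/2,1] : Fin 3 → ℚ) + ![1,0,0]) = ![3/2,1/2,1] by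
      funext i; fin_cases i <;> norm_num, simpQ, simpQ, simpQ] at h
    rw [hf0, hf2, hv0, hv2, h]; norm_num
  have ac12 : f2 * f1 = -(f1 * f2) := by
    have h := CliffordAlgebra.ι_mul_ι_comm (Q := Q) v2 v1
    rw [polar_eq, hv1, hv2, show ((![1/2,1/2,1] : Fin 3 → ℚ) + ![0,1,0]) = ![1/2,3/2,1] by
      funext i; fin_cases i <;> norm_num, simpQ, simpQ, simpQ] at h
    rw [hf1, hf2, hv1, hv2, h]; norm_num
  -- tail versions
  have swap01 : ∀ x : CliffordAlgebra Q, f1 * (f0 * x) = -(f0 * (f1 * x)) := by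
    intro x; rw [← mul_assoc, ac01, neg_mul, mul_assoc]
  have swap02 : ∀ x : CliffordAlgebra Q, f2 * (f0 * x) = -(f0 * (f2 * x)) := by
    intro x; rw [← mul_assoc, ac02, neg_mul, mul_assoc]
  have swap12 : ∀ x : CliffordAlgebra Q, f2 * (f1 * x) = -(f1 * (f2 * x)) := by
    intro x; rw [← mul_assoc, ac12, neg_mul, mul_assoc]
  have tsq0 : ∀ x : CliffordAlgebra Q, f0 * (f0 * x) = (2:ℚ) • x := by
    intro x; rw [← mul_assoc, sq0, smul_mul_assoc, one_mul]
  have tsq1 : ∀ x : CliffordAlgebra Q, f1 * (f1 * x) = (3:ℚ) • x := by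
    intro x; rw [← mul_assoc, sq1, smul_mul_assoc, one_mul]
  have tsq2 : ∀ x : CliffordAlgebra Q, f2 * (f2 * x) = (-1/4:ℚ) • x := by
    intro x; rw [← mul_assoc, sq2, smul_mul_assoc, one_mul]
  -- multiplication table for i = f0f1, j = f1f2, k = f0f2
  have hii : (f0*f1) * (f0*f1) = (-6:ℚ) • (1 : CliffordAlgebra Q) := by
    simp only [mul_assoc, swap01, swap02, swap12, tsq0, tsq1, tsq2, sq0, sq1, sq2, ac01, ac02,
      ac12, mul_neg, neg_mul, neg_neg, mul_smul_comm, smul_smul, mul_one, one_mul]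
    all_goals module
  have hij : (f0*f1) * (f1*f2) = (3:ℚ) • (f0*f2) := by
    simp only [mul_assoc, swap01, swap02, swap12, tsq0, tsq1, tsq2, sq0, sq1, sq2, ac01, ac02,
      ac12, mul_neg, neg_mul, neg_neg, mul_smul_comm, smul_smul, mul_one, one_mul]
    all_goals module
  have hik : (f0*f1) * (f0*f2) = (-2:ℚ) • (f1*f2) := by
    simp only [mul_assoc, swap01, swap02, swap12, tsq0, tsq1, tsq2, sq0, sq1, sq2, ac01, ac02,
      ac12, mul_neg, neg_mul, neg_neg, mul_smul_comm, smul_smul, mul_one, one_mul]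
    all_goals module
  have hji : (f1*f2) * (f0*f1) = (-3:ℚ) • (f0*f2) := by
    simp only [mul_assoc, swap01, swap02, swap12, tsq0, tsq1, tsq2, sq0, sq1, sq2, ac01, ac02,
      ac12, mul_neg, neg_mul, neg_neg, mul_smul_comm, smul_smul, mul_one, one_mul]
    all_goals module
  have hjj : (f1*f2) * (f1*f2) = (3/4:ℚ) • (1 : CliffordAlgebra Q) := by
    simp only [mul_assoc, swap01, swap02, swap12, tsq0, tsq1, tsq2, sq0, sq1, sq2, ac01, ac02,
      ac12, mul_neg, neg_mul, neg_neg, mul_smul_comm, smul_smul, mul_one, one_mul]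
    all_goals module
  have hjk : (f1*f2) * (f0*f2) = (-1/4:ℚ) • (f0*f1) := by
    simp only [mul_assoc, swap01, swap02, swap12, tsq0, tsq1, tsq2, sq0, sq1, sq2, ac01, ac02,
      ac12, mul_neg, neg_mul, neg_neg, mul_smul_comm, smul_smul, mul_one, one_mul]
    all_goals module
  have hki : (f0*f2) * (f0*f1) = (2:ℚ) • (f1*f2) := by
    simp only [mul_assoc, swap01, swap02, swap12, tsq0, tsq1, tsq2, sq0, sq1, sq2, ac01, ac02,
      ac12, mul_neg, neg_mul, neg_neg, mul_smul_comm, smul_smul, mul_one, one_mul]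
    all_goals module
  have hkj : (f0*f2) * (f1*f2) = (1/4:ℚ) • (f0*f1) := by
    simp only [mul_assoc, swap01, swap02, swap12, tsq0, tsq1, tsq2, sq0, sq1, sq2, ac01, ac02,
      ac12, mul_neg, neg_mul, neg_neg, mul_smul_comm, smul_smul, mul_one, one_mul]
    all_goals module
  have hkk : (f0*f2) * (f0*f2) = (1/2:ℚ) • (1 : CliffordAlgebra Q) := by
    simp only [mul_assoc, swap01, swap02, swap12, tsq0, tsq1, tsq2, sq0, sq1, sq2, ac01, ac02,
      ac12, mul_neg, neg_mul, neg_neg, mul_smul_comm, smul_smul, mul_one, one_mul]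
    all_goals module
  -- the span of 1, i, j, k
  set S : Submodule ℚ (CliffordAlgebra Q) :=
    Submodule.span ℚ (Set.range ![1, f0*f1, f1*f2, f0*f2]) with hS
  have hmem : ∀ idx : Fin 4, (![1, f0*f1, f1*f2, f0*f2] : Fin 4 → CliffordAlgebra Q) idx ∈ S :=
    fun idx => Submodule.subset_span ⟨idx, rfl⟩
  have hmem1 : (1 : CliffordAlgebra Q) ∈ S := hmem 0
  have hmemi : f0*f1 ∈ S := hmem 1
  have hmemj : f1*f2 ∈ S := hmem 2
  have hmemk : f0*f2 ∈ S := hmem 3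
  -- S is stable under left multiplication by i, j, k
  have stab : ∀ u : CliffordAlgebra Q,
      u * 1 ∈ S → u * (f0*f1) ∈ S → u * (f1*f2) ∈ S → u * (f0*f2) ∈ S →
      ∀ b ∈ S, u * b ∈ S := by
    intro u h1 h2 h3 h4 b hb
    induction hb using Submodule.span_induction with
    | mem x hx =>
      obtain ⟨idx, rfl⟩ := hx
      fin_cases idx
      · simpa using h1
      · simpa using h2
      · simpa using h3
      · simpa using h4
    | zero => simpa using Submodule.zero_mem S
    | add x y hx hy ihx ihy => rw [mul_add]; exact Submodule.add_mem S ihx ihy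
    | smul r x hx ih => rw [mul_smul_comm]; exact Submodule.smul_mem S r ih
  have hiS : ∀ b ∈ S, (f0*f1) * b ∈ S := by
    refine stab _ ?_ ?_ ?_ ?_
    · rw [mul_one]; exact hmemi
    · rw [hii]; exact Submodule.smul_mem S _ hmem1
    · rw [hij]; exact Submodule.smul_mem S _ hmemk
    · rw [hik]; exact Submodule.smul_mem S _ hmemj
  have hjS : ∀ b ∈ S, (f1*f2) * b ∈ S := by
    refine stab _ ?_ ?_ ?_ ?_
    · rw [mul_one]; exact hmemj
    · rw [hji]; exact Submodule.smul_mem S _ hmemk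
    · rw [hjj]; exact Submodule.smul_mem S _ hmem1
    · rw [hjk]; exact Submodule.smul_mem S _ hmemi
  have hkS : ∀ b ∈ S, (f0*f2) * b ∈ S := by
    refine stab _ ?_ ?_ ?_ ?_
    · rw [mul_one]; exact hmemk
    · rw [hki]; exact Submodule.smul_mem S _ hmemj
    · rw [hkj]; exact Submodule.smul_mem S _ hmemi
    · rw [hkk]; exact Submodule.smul_mem S _ hmem1
  -- decomposition of vectors
  have hdec : ∀ m : Fin 3 → ℚ,
      ι Q m = (m 0 - m 2 / 2) • f0 + (m 1 - m 2 / 2) • f1 + m 2 • f2 := by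
    intro m
    have hm : m = (m 0 - m 2 / 2) • v0 + (m 1 - m 2 / 2) • v1 + m 2 • v2 := by
      funext idx
      fin_cases idx <;> simp [hv0, hv1, hv2] <;> ring
    rw [hf0, hf1, hf2, ← map_smul, ← map_smul, ← map_smul, ← map_add, ← map_add, ← hm]
  -- left multiplication by a product of two vectors preserves S
  have hmul : ∀ (m₁ m₂ : Fin 3 → ℚ), ∀ b ∈ S, ι Q m₁ * ι Q m₂ * b ∈ S := by
    intro m₁ m₂ b hb
    rw [hdec m₁, hdec m₂]
    simp only [add_mul, mul_add, smul_mul_assoc, mul_smul_comm, smul_smul, smul_add]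
    have e00 : ∀ b ∈ S, f0 * f0 * b ∈ S := by
      intro b hb; rw [sq0, smul_mul_assoc, one_mul]; exact Submodule.smul_mem S _ hb
    have e11 : ∀ b ∈ S, f1 * f1 * b ∈ S := by
      intro b hb; rw [sq1, smul_mul_assoc, one_mul]; exact Submodule.smul_mem S _ hb
    have e22 : ∀ b ∈ S, f2 * f2 * b ∈ S := by
      intro b hb; rw [sq2, smul_mul_assoc, one_mul]; exact Submodule.smul_mem S _ hb
    have e10 : ∀ b ∈ S, f1 * f0 * b ∈ S := by
      intro b hb; rw [ac01, neg_mul]; exact Submodule.neg_mem S (hiS b hb)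
    have e20 : ∀ b ∈ S, f2 * f0 * b ∈ S := by
      intro b hb; rw [ac02, neg_mul]; exact Submodule.neg_mem S (hkS b hb)
    have e21 : ∀ b ∈ S, f2 * f1 * b ∈ S := by
      intro b hb; rw [ac12, neg_mul]; exact Submodule.neg_mem S (hjS b hb)
    repeat' apply Submodule.add_mem
    all_goals apply Submodule.smul_mem
    · exact e00 b hb
    · exact e10 b hb
    · exact e20 b hb
    · exact hiS b hb
    · exact e11 b hb
    · exact e21 b hb
    · exact hkS b hb
    · exact hjS b hb
    · exact e22 b hb
  -- every even element lies in S
  have haS : a ∈ S := by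
    have ha' : a ∈ CliffordAlgebra.evenOdd Q 0 := by
      rw [← CliffordAlgebra.even_toSubmodule]
      exact ha
    clear ha
    induction a, ha' using CliffordAlgebra.even_induction with
    | algebraMap r =>
      rw [Algebra.algebraMap_eq_smul_one]
      exact Submodule.smul_mem S r hmem1
    | add x y hx hy ihx ihy => exact Submodule.add_mem S ihx ihy
    | ι_mul_ι_mul m₁ m₂ x hx ih => exact hmul m₁ m₂ x ih
  -- representation of a, and its reverse
  obtain ⟨c, hc⟩ := (Submodule.mem_span_range_iff_exists_fun ℚ).mp haS
  rw [Fin.sum_univ_four] at hc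
  simp only [Matrix.cons_val_zero, Matrix.cons_val_one, Matrix.head_cons,
    Matrix.cons_val_two, Matrix.tail_cons, Matrix.cons_val_three] at hc
  have hrev0 : reverse (Q := Q) f0 = f0 := by rw [hf0]; exact reverse_ι _
  have hrev1 : reverse (Q := Q) f1 = f1 := by rw [hf1]; exact reverse_ι _
  have hrev2 : reverse (Q := Q) f2 = f2 := by rw [hf2]; exact reverse_ι _
  have hrev : reverse a = c 0 • 1 + (-(c 1)) • (f0*f1) + (-(c 2)) • (f1*f2) +
      (-(c 3)) • (f0*f2) := by
    rw [← hc]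
    simp only [map_add, map_smul, reverse.map_one, reverse.map_mul, hrev0, hrev1, hrev2,
      ac01, ac02, ac12, smul_neg, neg_smul]
  -- the norm computation
  have hnorm : a * reverse a =
      algebraMap ℚ (CliffordAlgebra Q)
        ((c 0)^2 + 6*(c 1)^2 - 3/4*(c 2)^2 - 1/2*(c 3)^2) := by
    rw [hrev, ← hc, Algebra.algebraMap_eq_smul_one]
    simp only [mul_add, add_mul, smul_mul_assoc, mul_smul_comm, smul_smul, mul_one, one_mul,
      hii, hij, hik, hji, hjj, hjk, hki, hkj, hkk]
    module
  refine ⟨⟨_, hnorm⟩, fun hne h0 => ?_⟩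
  rw [hnorm] at h0
  letI : Invertible (2 : ℚ) := invertibleOfNonzero (by norm_num)
  haveI : Nontrivial (CliffordAlgebra Q) := inferInstance
  have hinj : Function.Injective (algebraMap ℚ (CliffordAlgebra Q)) :=
    (algebraMap ℚ (CliffordAlgebra Q)).injective
  have hN : (c 0)^2 + 6*(c 1)^2 - 3/4*(c 2)^2 - 1/2*(c 3)^2 = 0 := by
    apply hinj
    rw [h0, map_zero]
  have hsq : (2 * c 0)^2 + 6*(2 * c 1)^2 = 3*(c 2)^2 + 2*(c 3)^2 := by linarith [hN] <;> ring
  obtain ⟨h1, h2, h3, h4⟩ := rat_aniso_s11 _ _ _ _ hsq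
  apply hne
  rw [← hc]
  have hc0 : c 0 = 0 := by linarith
  have hc1 : c 1 = 0 := by linarith
  rw [hc0, hc1, h3, h4]
  simp
end

section
/- Let Q_ℝ be the quadratic form Q(x₁,x₂,x₃) = 2x₁² + 3x₂² + x₃² − 2x₁x₃ − 3x₂x₃ on ℝ³ (a form of signature (2,1)). Then the even Clifford algebra of Q_ℝ is isomorphic as an ℝ-algebra to the algebra of 2×2 real matrices: there exists an ℝ-algebra isomorphism (CliffordAlgebra.even Q_ℝ) ≃ Matrix (Fin 2) (Fin 2) ℝ. In other words, C₊(Q) is a quaternion algebra of indefinite type. -/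
open CliffordAlgebra

section EvenIso
variable {R M₁ M₂ : Type*} [CommRing R] [AddCommGroup M₁] [AddCommGroup M₂]
  [Module R M₁] [Module R M₂] {Q₁ : QuadraticForm R M₁} {Q₂ : QuadraticForm R M₂}

theorem mem_even_map_aux (e : Q₁.IsometryEquiv Q₂) {x : CliffordAlgebra Q₁}
    (hx : x ∈ even Q₁) : equivOfIsometry e x ∈ even Q₂ := by
  induction x, hx using even_induction with
  | algebraMap r => rw [AlgEquiv.commutes]; exact (even Q₂).algebraMap_mem r
  | add x y hx hy ihx ihy => rw [map_add]; exact add_mem ihx ihy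
  | ι_mul_ι_mul m₁ m₂ x hx ih =>
      rw [map_mul, map_mul, equivOfIsometry_apply, equivOfIsometry_apply, map_apply_ι,
        map_apply_ι]
      exact mul_mem (show _ ∈ even Q₂ from ι_mul_ι_mem_evenOdd_zero Q₂ _ _) ih

/-- The restriction of `equivOfIsometry` to even parts, as an `AlgHom`. -/
def evenHomOfIsometry (e : Q₁.IsometryEquiv Q₂) : even Q₁ →ₐ[R] even Q₂ :=
  ((equivOfIsometry e).toAlgHom.comp (even Q₁).val).codRestrict (even Q₂)
    fun x => mem_even_map_aux e x.2

@[simp]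
theorem evenHomOfIsometry_apply_coe (e : Q₁.IsometryEquiv Q₂) (x : even Q₁) :
    (evenHomOfIsometry e x : CliffordAlgebra Q₂) = equivOfIsometry e (x : CliffordAlgebra Q₁) :=
  rfl

/-- Even Clifford algebras of isometric quadratic forms are isomorphic. -/
def evenEquivOfIsometry (e : Q₁.IsometryEquiv Q₂) : even Q₁ ≃ₐ[R] even Q₂ :=
  AlgEquiv.ofAlgHom (evenHomOfIsometry e) (evenHomOfIsometry e.symm)
    (AlgHom.ext fun x => Subtype.ext <| by
      simp only [AlgHom.comp_apply, evenHomOfIsometry_apply_coe, AlgHom.id_apply]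
      rw [← equivOfIsometry_symm]
      exact (equivOfIsometry e).apply_symm_apply _)
    (AlgHom.ext fun x => Subtype.ext <| by
      simp only [AlgHom.comp_apply, evenHomOfIsometry_apply_coe, AlgHom.id_apply]
      rw [← equivOfIsometry_symm]
      exact (equivOfIsometry e).symm_apply_apply _)

end EvenIso

noncomputable section Mat
open scoped Quaternion

/-- A quaternionic basis of `M₂(ℝ)` with `i² = j² = 1`. -/
def matQuatBasis : QuaternionAlgebra.Basis (Matrix (Fin 2) (Fin 2) ℝ) (1:ℝ) 0 1 where
  i := !![1, 0; 0, -1]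
  j := !![0, 1; 1, 0]
  k := !![0, 1; -1, 0]
  i_mul_i := by
    rw [one_smul]
    norm_num [Matrix.mul_fin_two, ← Matrix.one_fin_two]
  j_mul_j := by
    rw [one_smul]
    norm_num [Matrix.mul_fin_two, ← Matrix.one_fin_two]
  i_mul_j := by norm_num [Matrix.mul_fin_two]
  j_mul_i := by
    ext i j
    fin_cases i <;> fin_cases j <;> norm_num [Matrix.mul_fin_two]

theorem matQuatBasis_lift (q : ℍ[ℝ,(1:ℝ),1]) :
    matQuatBasis.liftHom q =
      !![q.re + q.imI, q.imJ + q.imK; q.imJ - q.imK, q.re - q.imI] := by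
  show matQuatBasis.lift q = _
  rw [QuaternionAlgebra.Basis.lift]
  ext i j
  fin_cases i <;> fin_cases j <;>
    simp [matQuatBasis, Matrix.algebraMap_eq_diagonal] <;> ring

theorem matQuatBasis_bij : Function.Bijective matQuatBasis.liftHom := by
  constructor
  · rw [injective_iff_map_eq_zero]
    intro q hq
    rw [matQuatBasis_lift] at hq
    have h00 := congrFun (congrFun hq 0) 0
    have h01 := congrFun (congrFun hq 0) 1
    have h10 := congrFun (congrFun hq 1) 0
    have h11 := congrFun (congrFun hq 1) 1
    simp at h00 h01 h10 h11
    ext <;> simp <;> linarith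
  · intro M
    refine ⟨⟨(M 0 0 + M 1 1) / 2, (M 0 0 - M 1 1) / 2, (M 0 1 + M 1 0) / 2,
      (M 0 1 - M 1 0) / 2⟩, ?_⟩
    rw [matQuatBasis_lift]
    rw [Matrix.eta_fin_two M]
    norm_num
    ring_nf
    simp

/-- `ℍ[ℝ,(1:ℝ),1] ≃ₐ[ℝ] M₂(ℝ)`. -/
def quatEquivMat : ℍ[ℝ,(1:ℝ),1] ≃ₐ[ℝ] Matrix (Fin 2) (Fin 2) ℝ :=
  AlgEquiv.ofBijective matQuatBasis.liftHom matQuatBasis_bij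

end Mat

open scoped Quaternion

/-- For the Tits form `Q(x₁,x₂,x₃) = 2x₁² + 3x₂² + x₃² − 2x₁x₃ − 3x₂x₃` over `ℝ`
(of signature `(2,1)`), the even Clifford algebra is isomorphic as an `ℝ`-algebra to
the algebra of `2 × 2` real matrices; i.e. `C₊(Q)` is an indefinite quaternion
algebra. -/
theorem even_clifford_iso_matrix_algebra
    (Q : QuadraticForm ℝ (Fin 3 → ℝ))
    (hQ : ∀ x, Q x = 2 * x 0 ^ 2 + 3 * x 1 ^ 2 + x 2 ^ 2 - 2 * x 0 * x 2 - 3 * x 1 * x 2) :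
    Nonempty ((CliffordAlgebra.even Q) ≃ₐ[ℝ] Matrix (Fin 2) (Fin 2) ℝ) := by
  set Q₂ : QuadraticForm ℝ (ℝ × ℝ) := CliffordAlgebraQuaternion.Q (1:ℝ) 1 with hQ₂
  set t : ℝ := Real.sqrt 6 with htdef
  have ht : t * t = 6 := Real.mul_self_sqrt (by norm_num)
  have htne : t ≠ 0 := by positivity
  let fwd : (Fin 3 → ℝ) →ₗ[ℝ] (ℝ × ℝ) × ℝ :=
    { toFun := fun x => ((x 0 - 3/2 * x 1, x 2 - x 0 - 3/2 * x 1), t/2 * x 1)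
      map_add' := fun x y => by
        simp only [Pi.add_apply, Prod.mk_add_mk, Prod.mk.injEq]
        refine ⟨⟨by ring, by ring⟩, by ring⟩
      map_smul' := fun r x => by
        simp only [Pi.smul_apply, Prod.smul_mk, smul_eq_mul, RingHom.id_apply, Prod.mk.injEq]
        refine ⟨⟨by ring, by ring⟩, by ring⟩ }
  let bwd : (ℝ × ℝ) × ℝ →ₗ[ℝ] (Fin 3 → ℝ) :=
    { toFun := fun p => ![p.1.1 + 3 * (p.2 / t), 2 * p.2 / t, p.1.2 + p.1.1 + 6 * (p.2 / t)]
      map_add' := fun p q => by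
        funext i
        fin_cases i <;>
          simp [Prod.fst_add, Prod.snd_add] <;> ring
      map_smul' := fun r p => by
        funext i
        fin_cases i <;>
          simp [Prod.smul_fst, Prod.smul_snd] <;> ring }
  have h1 : fwd.comp bwd = LinearMap.id := by
    apply LinearMap.ext
    intro p
    simp only [LinearMap.comp_apply, LinearMap.coe_mk, AddHom.coe_mk, LinearMap.id_apply, fwd, bwd]
    simp only [Matrix.cons_val_zero, Matrix.cons_val_one, Matrix.head_cons,
      Matrix.cons_val_two, Matrix.tail_cons]
    have : t / 2 * (2 * p.2 / t) = p.2 := by field_simp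
    rw [this]
    ext <;> simp <;> field_simp <;> ring
  have h2 : bwd.comp fwd = LinearMap.id := by
    apply LinearMap.ext
    intro x
    funext i
    fin_cases i <;>
      simp only [LinearMap.comp_apply, LinearMap.coe_mk, AddHom.coe_mk, LinearMap.id_apply,
        fwd, bwd, Matrix.cons_val_zero, Matrix.cons_val_one, Matrix.head_cons,
        Matrix.cons_val_two, Matrix.tail_cons, show ((⟨0, by omega⟩ : Fin 3)) = 0 from rfl,
        show ((⟨1, by omega⟩ : Fin 3)) = 1 from rfl,
        show ((⟨2, by omega⟩ : Fin 3)) = 2 from rfl] <;>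
      field_simp <;> ring
  let E : (Fin 3 → ℝ) ≃ₗ[ℝ] (ℝ × ℝ) × ℝ := LinearEquiv.ofLinear fwd bwd h1 h2
  let e : Q.IsometryEquiv (CliffordAlgebra.EquivEven.Q' Q₂) :=
    { toLinearEquiv := E
      map_app' := fun x => by
        rw [CliffordAlgebra.EquivEven.Q'_apply, hQ x]
        show Q₂ ((x 0 - 3/2 * x 1, x 2 - x 0 - 3/2 * x 1)) - (t/2 * x 1) * (t/2 * x 1) = _
        rw [CliffordAlgebraQuaternion.Q_apply]
        linear_combination (- (x 1 * x 1) / 4) * ht }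
  exact ⟨((evenEquivOfIsometry e).trans (CliffordAlgebra.equivEven Q₂).symm).trans
    (CliffordAlgebraQuaternion.equiv.trans quatEquivMat)⟩
end
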